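/- Let (X,d) be a complete metric space and let S = (X,(φ_j)_{j=1}^L,(p_j)_{j=1}^L) be a GIFS with probabilities of order m in which each φ_j is an (a_0,...,a_{m−1})-contraction with α := Σ_{i=0}^{m−1} a_i < 1, and let μ_S be its Hutchinson measure (the unique compactly supported Borel probability measure with M_S(μ_S,...,μ_S) = μ_S). Let ε > 0, let X̂ be a proper ε-net of X, let r : X → X̂ be a Borel measurable ε-projection, and define the discretized diagonal Markov operator M̄_Ŝ(ν) := Σ_{j=1}^L p_j · (r∘φ_j)♯(ν × ... × ν) (pushforward of the m-fold product). Then for every Borel probability measure ν with compact support contained in X̂ and every n ∈ ℕ, d_MK(M̄_Ŝⁿ(ν), μ_S) ≤ ε/(1−α) + αⁿ · d_MK(ν, μ_S). In particular, for all sufficiently large n, d_MK(M̄_Ŝⁿ(ν), μ_S) ≤ 2ε/(1−α). -/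

import Mathlib

open MeasureTheory Filter

/-- The Monge–Kantorovich (Hutchinson) distance between two measures. -/
noncomputable def dMK {X : Type*} [MetricSpace X] [MeasurableSpace X]
    (μ ν : Measure X) : ℝ :=
  sSup {s : ℝ | ∃ f : X → ℝ, LipschitzWith 1 f ∧ s = |∫ x, f x ∂μ - ∫ x, f x ∂ν|}

/-- The topological support of a Borel measure. -/
def msupport {X : Type*} [TopologicalSpace X] [MeasurableSpace X]
    (μ : Measure X) : Set X :=
  {x | ∀ U : Set X, IsOpen U → x ∈ U → 0 < μ U}

open Set TopologicalSpace

set_option linter.unusedSectionVars false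
set_option linter.unusedVariables false
set_option maxHeartbeats 1000000

section Aux
variable {X : Type*} [MetricSpace X] [MeasurableSpace X] [BorelSpace X]

lemma my_ball_meas {k : ℕ} (z : Fin k → X) {t : ℝ} (ht : 0 < t) :
    MeasurableSet (Metric.ball z t) := by
  rw [ball_pi _ ht]
  exact MeasurableSet.univ_pi fun i => measurableSet_ball

lemma my_open_inter_meas {k : ℕ} {U Q : Set (Fin k → X)} (hU : IsOpen U)
    (hQm : MeasurableSet Q) (hQs : IsSeparable (U ∩ Q)) : MeasurableSet (U ∩ Q) := by
  haveI : SeparableSpace ↥(U ∩ Q) := hQs.separableSpace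
  obtain ⟨d, hdc, hdd⟩ := TopologicalSpace.exists_countable_dense ↥(U ∩ Q)
  classical
  set V : Set (Fin k → X) := ⋃ y ∈ Subtype.val '' d, ⋃ n : ℕ,
    if Metric.ball y (1 / (n + 1) : ℝ) ⊆ U then Metric.ball y (1 / (n + 1) : ℝ) else ∅ with hV
  have hVm : MeasurableSet V := by
    refine MeasurableSet.biUnion ((hdc.image _)) fun y _ => MeasurableSet.iUnion fun n => ?_
    split_ifs
    · exact my_ball_meas y (by positivity)
    · exact MeasurableSet.empty
  have hVU : V ⊆ U := by
    refine Set.iUnion₂_subset fun y _ => Set.iUnion_subset fun n => ?_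
    split_ifs with h
    · exact h
    · exact Set.empty_subset _
  have hSV : U ∩ Q ⊆ V := by
    rintro x hx
    obtain ⟨n, hn⟩ : ∃ n : ℕ, Metric.ball x (2 / (n + 1) : ℝ) ⊆ U := by
      obtain ⟨t, ht, htU⟩ := Metric.isOpen_iff.1 hU x hx.1
      obtain ⟨n, hn⟩ := exists_nat_gt (2 / t)
      refine ⟨n, subset_trans (Metric.ball_subset_ball ?_) htU⟩
      rw [div_le_iff₀ (by positivity)]
      rw [div_lt_iff₀ ht] at hn
      nlinarith
    -- find a point of d within 1/(n+1) of x
    have hxcl : (⟨x, hx⟩ : ↥(U ∩ Q)) ∈ closure d := by rw [hdd.closure_eq]; trivial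
    obtain ⟨⟨y, hy⟩, hyd, hxy⟩ := Metric.mem_closure_iff.1 hxcl (1 / (n + 1) : ℝ) (by positivity)
    have hsub : Metric.ball y (1 / (n + 1) : ℝ) ⊆ U := by
      refine subset_trans (fun z hz => ?_) hn
      have : dist z x ≤ dist z y + dist y x := dist_triangle _ _ _
      have hd : dist (⟨x, hx⟩ : ↥(U ∩ Q)) ⟨y, hy⟩ = dist x y := rfl
      rw [hd] at hxy
      simp only [Metric.mem_ball] at hz ⊢
      have : dist y x < 1 / (n + 1) := by rw [dist_comm] at hxy; exact hxy
      calc dist z x ≤ dist z y + dist y x := dist_triangle _ _ _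
        _ < 1 / (n + 1) + 1 / (n + 1) := by linarith [hz]
        _ = 2 / (n + 1) := by ring
    refine Set.mem_biUnion ⟨⟨y, hy⟩, hyd, rfl⟩ ?_
    refine Set.mem_iUnion.2 ⟨n, ?_⟩
    rw [if_pos hsub]
    have hd : dist (⟨x, hx⟩ : ↥(U ∩ Q)) ⟨y, hy⟩ = dist x y := rfl
    rw [hd] at hxy
    simpa [Metric.mem_ball, dist_comm] using hxy
  have : U ∩ Q = V ∩ Q := Set.Subset.antisymm (Set.subset_inter hSV Set.inter_subset_right)
    (Set.inter_subset_inter_left Q hVU |>.trans (le_refl _))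
  rw [this]
  exact hVm.inter hQm

lemma my_aemeasurable {k : ℕ} {Q : Set (Fin k → X)} (hQm : MeasurableSet Q)
    (hQs : IsSeparable Q) {Y : Type*} [MetricSpace Y] [MeasurableSpace Y] [BorelSpace Y]
    [Nonempty Y] {f : (Fin k → X) → Y} (hf : Continuous f)
    {π : Measure (Fin k → X)} (hπ : π Qᶜ = 0) : AEMeasurable f π := by
  haveI : OpensMeasurableSpace ↥Q := by
    constructor
    refine MeasurableSpace.generateFrom_le ?_
    intro s hs
    obtain ⟨U, hU, rfl⟩ := isOpen_induced_iff.1 hs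
    have h2 : (Subtype.val : ↥Q → _) ⁻¹' U = (Subtype.val : ↥Q → _) ⁻¹' (U ∩ Q) := by
      ext z; simp [z.2]
    rw [h2]
    exact measurable_subtype_coe (my_open_inter_meas hU hQm (hQs.mono inter_subset_right))
  have hmeas : Measurable (f ∘ (Subtype.val : ↥Q → _)) :=
    (hf.comp continuous_subtype_val).measurable
  have hemb : MeasurableEmbedding (Subtype.val : ↥Q → _) := MeasurableEmbedding.subtype_coe hQm
  obtain ⟨g, hg, hgf⟩ := hemb.exists_measurable_extend hmeas fun y => ⟨Classical.arbitrary Y⟩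
  refine ⟨g, hg, ?_⟩
  have : ∀ᵐ x ∂π, x ∈ Q := by
    rw [Filter.eventually_iff, mem_ae_iff]; simpa using hπ
  filter_upwards [this] with x hx
  have := congrFun hgf ⟨x, hx⟩
  simpa using this.symm

lemma my_pi_compl_null {k : ℕ} {ρ : Measure X} [IsProbabilityMeasure ρ] {K : Set X}
    (hρ : ρ Kᶜ = 0) :
    (Measure.pi fun _ : Fin k => ρ) (Set.pi Set.univ fun _ => K)ᶜ = 0 := by
  refine measure_mono_null (fun x hx => ?_) (measure_iUnion_null
    (fun i : Fin k => Measure.pi_eval_preimage_null (μ := fun _ : Fin k => ρ) (i := i) hρ))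
  simp only [Set.mem_compl_iff, Set.mem_pi, Set.mem_univ, forall_true_left, not_forall] at hx
  obtain ⟨i, hi⟩ := hx
  exact Set.mem_iUnion.2 ⟨i, by simpa using hi⟩

lemma my_ae_mem {α : Type*} [MeasurableSpace α] {μ : Measure α} {K : Set α}
    (h : μ Kᶜ = 0) : ∀ᵐ x ∂μ, x ∈ K := by
  rw [Filter.eventually_iff, mem_ae_iff]; simpa using h

lemma my_integrable_pi {k : ℕ} {ρ : Measure X} [IsProbabilityMeasure ρ] {K : Set X}
    (hK : IsCompact K) (hρ : ρ Kᶜ = 0) {g : (Fin k → X) → ℝ} (hg : Continuous g) :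
    Integrable g (Measure.pi fun _ : Fin k => ρ) := by
  have hQm : MeasurableSet (Set.pi Set.univ fun _ : Fin k => K) :=
    MeasurableSet.univ_pi fun _ => hK.measurableSet
  have hQc : IsCompact (Set.pi Set.univ fun _ : Fin k => K) := isCompact_univ_pi fun _ => hK
  have hπQ : (Measure.pi fun _ : Fin k => ρ) (Set.pi Set.univ fun _ => K)ᶜ = 0 :=
    my_pi_compl_null hρ
  have hasm : AEStronglyMeasurable g (Measure.pi fun _ : Fin k => ρ) :=
    (my_aemeasurable hQm hQc.isSeparable hg hπQ).aestronglyMeasurable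
  obtain ⟨C, hC⟩ := hQc.exists_bound_of_continuousOn hg.continuousOn
  refine Integrable.mono' (integrable_const C) hasm ?_
  filter_upwards [my_ae_mem hπQ] with x hx using hC x hx

lemma my_integrable_X {ρ : Measure X} [IsProbabilityMeasure ρ] {K : Set X}
    (hK : IsCompact K) (hρ : ρ Kᶜ = 0) {g : X → ℝ} (hg : Continuous g) :
    Integrable g ρ := by
  obtain ⟨C, hC⟩ := hK.exists_bound_of_continuousOn hg.continuousOn
  refine Integrable.mono' (integrable_const C) hg.aestronglyMeasurable ?_
  filter_upwards [my_ae_mem hρ] with x hx using hC x hx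

lemma my_abs_integral_le {α : Type*} [MeasurableSpace α] (μ : Measure α)
    [IsProbabilityMeasure μ] {h : α → ℝ} {C : ℝ} (hb : ∀ᵐ x ∂μ, |h x| ≤ C) :
    |∫ x, h x ∂μ| ≤ C := by
  have := norm_integral_le_of_norm_le_const (μ := μ) (f := h) (C := C)
    (by simpa [Real.norm_eq_abs] using hb)
  simpa [measure_univ, Real.norm_eq_abs] using this

lemma my_K_nonempty {ρ : Measure X} [IsProbabilityMeasure ρ] {K : Set X}
    (hρ : ρ Kᶜ = 0) : K.Nonempty := by
  rcases Set.eq_empty_or_nonempty K with h | h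
  · exfalso
    have : ρ Set.univ = 0 := by rw [← Set.compl_empty, ← h]; exact hρ
    simp [measure_univ] at this
  · exact h

lemma my_dMK_zero_mem (μ ν : Measure X) :
    (0 : ℝ) ∈ {s : ℝ | ∃ f : X → ℝ, LipschitzWith 1 f ∧ s = |∫ x, f x ∂μ - ∫ x, f x ∂ν|} :=
  ⟨fun _ => 0, (LipschitzWith.const 0).weaken zero_le_one, by simp⟩

lemma my_dMK_bdd {μ ν : Measure X} [IsProbabilityMeasure μ] [IsProbabilityMeasure ν]
    {Kμ Kν : Set X} (hKμ : IsCompact Kμ) (hμ : μ Kμᶜ = 0)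
    (hKν : IsCompact Kν) (hν : ν Kνᶜ = 0) :
    BddAbove {s : ℝ | ∃ f : X → ℝ, LipschitzWith 1 f ∧ s = |∫ x, f x ∂μ - ∫ x, f x ∂ν|} := by
  obtain ⟨x0, hx0⟩ := my_K_nonempty hμ
  obtain ⟨C, hC⟩ := (hKμ.union hKν).isBounded.subset_closedBall x0
  refine ⟨C + C, ?_⟩
  rintro s ⟨f, hf, rfl⟩
  have key : ∀ (ρ : Measure X) (K : Set X), IsCompact K → ρ Kᶜ = 0 → K ⊆ Metric.closedBall x0 C
      → IsProbabilityMeasure ρ → |∫ x, f x ∂ρ - f x0| ≤ C := by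
    intro ρ K hK hρK hKC hprob
    have hint : Integrable f ρ := my_integrable_X hK hρK hf.continuous
    have : ∫ x, f x ∂ρ - f x0 = ∫ x, (f x - f x0) ∂ρ := by
      rw [integral_sub hint (integrable_const _), integral_const]
      simp [measure_univ]
    rw [this]
    refine my_abs_integral_le ρ ?_
    filter_upwards [my_ae_mem hρK] with x hx
    calc |f x - f x0| = dist (f x) (f x0) := by rw [Real.dist_eq]
      _ ≤ 1 * dist x x0 := hf.dist_le_mul x x0
      _ ≤ C := by
          rw [one_mul]
          exact Metric.mem_closedBall.1 (hKC hx)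
  calc |∫ x, f x ∂μ - ∫ x, f x ∂ν|
      ≤ |∫ x, f x ∂μ - f x0| + |f x0 - ∫ x, f x ∂ν| := abs_sub_le _ _ _
    _ ≤ C + C := by
        refine add_le_add (key μ Kμ hKμ hμ (fun x hx => hC (Or.inl hx)) inferInstance) ?_
        rw [abs_sub_comm]
        exact key ν Kν hKν hν (fun x hx => hC (Or.inr hx)) inferInstance

lemma my_dMK_nonneg {μ ν : Measure X} [IsProbabilityMeasure μ] [IsProbabilityMeasure ν]
    {Kμ Kν : Set X} (hKμ : IsCompact Kμ) (hμ : μ Kμᶜ = 0)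
    (hKν : IsCompact Kν) (hν : ν Kνᶜ = 0) : 0 ≤ dMK μ ν :=
  le_csSup (my_dMK_bdd hKμ hμ hKν hν) (my_dMK_zero_mem μ ν)

lemma my_dMK_le {μ ν : Measure X} {c : ℝ}
    (h : ∀ f : X → ℝ, LipschitzWith 1 f → |∫ x, f x ∂μ - ∫ x, f x ∂ν| ≤ c) :
    dMK μ ν ≤ c := by
  refine csSup_le ⟨0, my_dMK_zero_mem μ ν⟩ ?_
  rintro s ⟨f, hf, rfl⟩
  exact h f hf

lemma my_dMK_ge {μ ν : Measure X} [IsProbabilityMeasure μ] [IsProbabilityMeasure ν]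
    {Kμ Kν : Set X} (hKμ : IsCompact Kμ) (hμ : μ Kμᶜ = 0)
    (hKν : IsCompact Kν) (hν : ν Kνᶜ = 0) {f : X → ℝ} (hf : LipschitzWith 1 f) :
    |∫ x, f x ∂μ - ∫ x, f x ∂ν| ≤ dMK μ ν :=
  le_csSup (my_dMK_bdd hKμ hμ hKν hν) ⟨f, hf, rfl⟩

lemma my_lip_diff_le {μ ν : Measure X} [IsProbabilityMeasure μ] [IsProbabilityMeasure ν]
    {Kμ Kν : Set X} (hKμ : IsCompact Kμ) (hμ : μ Kμᶜ = 0)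
    (hKν : IsCompact Kν) (hν : ν Kνᶜ = 0) {G : X → ℝ} {c : ℝ} (hc : 0 ≤ c)
    (hG : ∀ x y, |G x - G y| ≤ c * dist x y) :
    |∫ x, G x ∂μ - ∫ x, G x ∂ν| ≤ c * dMK μ ν := by
  rcases eq_or_lt_of_le hc with hc0 | hc0
  · obtain ⟨x0, _⟩ := my_K_nonempty hμ
    have hGconst : G = fun _ => G x0 := by
      funext y
      have := hG y x0
      rw [← hc0, zero_mul] at this
      have := abs_nonpos_iff.1 (le_antisymm this (abs_nonneg _)).le
      linarith [sub_eq_zero.1 this]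
    rw [hGconst]
    simp [integral_const, measure_univ, ← hc0]
  · set f : X → ℝ := fun x => c⁻¹ * G x with hfdef
    have hf : LipschitzWith 1 f := by
      refine LipschitzWith.of_dist_le_mul fun x y => ?_
      rw [Real.dist_eq]
      simp only [NNReal.coe_one, one_mul]
      have : f x - f y = c⁻¹ * (G x - G y) := by rw [hfdef]; ring
      rw [this, abs_mul, abs_of_pos (inv_pos.2 hc0)]
      calc c⁻¹ * |G x - G y| ≤ c⁻¹ * (c * dist x y) := by
            exact mul_le_mul_of_nonneg_left (hG x y) (inv_pos.2 hc0).le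
        _ = dist x y := by field_simp
    have h1 : |∫ x, f x ∂μ - ∫ x, f x ∂ν| ≤ dMK μ ν := my_dMK_ge hKμ hμ hKν hν hf
    have h2 : ∀ ρ : Measure X, ∫ x, f x ∂ρ = c⁻¹ * ∫ x, G x ∂ρ := fun ρ => integral_const_mul _ _
    rw [h2 μ, h2 ν, ← mul_sub, abs_mul, abs_of_pos (inv_pos.2 hc0)] at h1
    calc |∫ x, G x ∂μ - ∫ x, G x ∂ν| = c * (c⁻¹ * |∫ x, G x ∂μ - ∫ x, G x ∂ν|) := by field_simp
      _ ≤ c * dMK μ ν := mul_le_mul_of_nonneg_left h1 hc0.le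

lemma my_cons_continuous {k : ℕ} (x : X) :
    Continuous (fun y : Fin k → X => (Fin.cons x y : Fin (k+1) → X)) := by
  refine continuous_pi fun i => ?_
  refine Fin.cases ?_ ?_ i
  · exact continuous_const
  · intro j
    exact continuous_apply j

lemma my_fubini_cons {k : ℕ} (ρ : Measure X) [IsProbabilityMeasure ρ]
    (g : (Fin (k+1) → X) → ℝ) (hint : Integrable g (Measure.pi fun _ : Fin (k+1) => ρ)) :
    ∫ z, g z ∂(Measure.pi fun _ : Fin (k+1) => ρ)
      = ∫ x, ∫ y, g (Fin.cons x y) ∂(Measure.pi fun _ : Fin k => ρ) ∂ρ := by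
  set T := MeasurableEquiv.piFinSuccAbove (fun _ : Fin (k+1) => X) 0 with hT
  have hmp : MeasurePreserving T (Measure.pi fun _ : Fin (k+1) => ρ)
      (ρ.prod (Measure.pi fun _ : Fin k => ρ)) :=
    measurePreserving_piFinSuccAbove (fun _ : Fin (k+1) => ρ) 0
  have hsymm : MeasurePreserving T.symm (ρ.prod (Measure.pi fun _ : Fin k => ρ))
      (Measure.pi fun _ : Fin (k+1) => ρ) := hmp.symm _
  have h1 : ∫ z, g z ∂(Measure.pi fun _ : Fin (k+1) => ρ)
      = ∫ q, g (T.symm q) ∂(ρ.prod (Measure.pi fun _ : Fin k => ρ)) :=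
    (hsymm.integral_comp T.symm.measurableEmbedding g).symm
  have hint2 : Integrable (fun q => g (T.symm q)) (ρ.prod (Measure.pi fun _ : Fin k => ρ)) :=
    (hsymm.integrable_comp_emb T.symm.measurableEmbedding).2 hint
  rw [h1, integral_prod _ hint2]
  congr 1
  funext x
  congr 1
  funext y
  congr 1
  simp [hT, MeasurableEquiv.piFinSuccAbove_symm_apply, Fin.insertNthEquiv, Fin.insertNth_zero]

lemma my_keyA {μ ν : Measure X} [hμp : IsProbabilityMeasure μ] [hνp : IsProbabilityMeasure ν]
    {Kμ Kν : Set X} (hKμ : IsCompact Kμ) (hμ : μ Kμᶜ = 0)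
    (hKν : IsCompact Kν) (hν : ν Kνᶜ = 0) :
    ∀ (k : ℕ) (b : Fin k → ℝ), (∀ i, 0 ≤ b i) →
    ∀ g : (Fin k → X) → ℝ,
      (∀ x y, |g x - g y| ≤ ∑ i, b i * dist (x i) (y i)) →
      |∫ x, g x ∂(Measure.pi fun _ : Fin k => μ)
        - ∫ x, g x ∂(Measure.pi fun _ : Fin k => ν)| ≤ (∑ i, b i) * dMK μ ν := by
  intro k
  induction k with
  | zero =>
    intro b hb g hg
    have hgc : g = fun _ => g (fun i => i.elim0) := by
      funext x
      have := hg x (fun i => i.elim0)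
      simp only [Finset.univ_eq_empty, Finset.sum_empty] at this
      have h0 : g x - g (fun i => i.elim0) = 0 := by
        rcases abs_nonpos_iff.1 (le_antisymm this (abs_nonneg _)).le with h
        exact h
      linarith [h0]
    rw [hgc]
    simp [integral_const, measure_univ]
  | succ k ih =>
    intro b hb g hg
    -- continuity of g
    have hgc : Continuous g := by
      have : LipschitzWith ⟨∑ i, b i, Finset.sum_nonneg fun i _ => hb i⟩ g := by
        refine LipschitzWith.of_dist_le_mul fun x y => ?_
        rw [Real.dist_eq]
        refine (hg x y).trans ?_
        calc ∑ i, b i * dist (x i) (y i) ≤ ∑ i, b i * dist x y :=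
              Finset.sum_le_sum fun i _ =>
                mul_le_mul_of_nonneg_left (dist_le_pi_dist x y i) (hb i)
          _ = (∑ i, b i) * dist x y := by rw [Finset.sum_mul]
      exact this.continuous
    -- the partial integral
    set H : Measure X → X → ℝ :=
      fun ρ x => ∫ y, g (Fin.cons x y) ∂(Measure.pi fun _ : Fin k => ρ) with hH
    have haux : ∀ (ρ : Measure X) (K : Set X), IsProbabilityMeasure ρ → IsCompact K →
        ρ Kᶜ = 0 →
        (∫ z, g z ∂(Measure.pi fun _ : Fin (k+1) => ρ) = ∫ x, H ρ x ∂ρ) ∧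
        (∀ x x', |H ρ x - H ρ x'| ≤ b 0 * dist x x') := by
      intro ρ K hρp hK hρK
      haveI := hρp
      have hci : ∀ x : X, Integrable (fun y : Fin k → X => g (Fin.cons x y))
          (Measure.pi fun _ : Fin k => ρ) := fun x =>
        my_integrable_pi hK hρK (hgc.comp (my_cons_continuous x))
      constructor
      · exact my_fubini_cons ρ g (my_integrable_pi hK hρK hgc)
      · intro x x'
        have h1 : H ρ x - H ρ x'
            = ∫ y, (g (Fin.cons x y) - g (Fin.cons x' y)) ∂(Measure.pi fun _ : Fin k => ρ) := by
          rw [hH]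
          rw [integral_sub (hci x) (hci x')]
        rw [h1]
        refine my_abs_integral_le _ (Filter.Eventually.of_forall fun y => ?_)
        refine (hg _ _).trans ?_
        rw [Fin.sum_univ_succ]
        simp only [Fin.cons_zero, Fin.cons_succ, dist_self, mul_zero, add_zero]
        refine le_of_eq ?_
        rw [Finset.sum_eq_zero fun i _ => by simp [dist_self]]
        ring
    obtain ⟨hfμ, hlipμ⟩ := haux μ Kμ hμp hKμ hμ
    obtain ⟨hfν, hlipν⟩ := haux ν Kν hνp hKν hν
    -- pointwise comparison of H μ and H ν
    have hHdiff : ∀ x : X, |H μ x - H ν x| ≤ (∑ i : Fin k, b i.succ) * dMK μ ν := by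
      intro x
      refine ih (fun i => b i.succ) (fun i => hb _) (fun y => g (Fin.cons x y)) fun y y' => ?_
      refine (hg _ _).trans ?_
      rw [Fin.sum_univ_succ]
      simp [Fin.cons_zero, Fin.cons_succ, dist_self]
    -- continuity of the partial integrals
    have hHcont : ∀ ρ : Measure X, (∀ x x', |H ρ x - H ρ x'| ≤ b 0 * dist x x') →
        Continuous (H ρ) := by
      intro ρ hlip
      have : LipschitzWith ⟨b 0, hb 0⟩ (H ρ) := by
        refine LipschitzWith.of_dist_le_mul fun x x' => ?_
        rw [Real.dist_eq]
        exact hlip x x'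
      exact this.continuous
    have hintHμ : Integrable (H μ) μ := my_integrable_X hKμ hμ (hHcont μ hlipμ)
    have hintHν : Integrable (H ν) μ := my_integrable_X hKμ hμ (hHcont ν hlipν)
    rw [hfμ, hfν]
    calc |∫ x, H μ x ∂μ - ∫ x, H ν x ∂ν|
        ≤ |∫ x, H μ x ∂μ - ∫ x, H ν x ∂μ| + |∫ x, H ν x ∂μ - ∫ x, H ν x ∂ν| :=
          abs_sub_le _ _ _
      _ ≤ (∑ i : Fin k, b i.succ) * dMK μ ν + b 0 * dMK μ ν := by
          refine add_le_add ?_ (my_lip_diff_le hKμ hμ hKν hν (hb 0) fun x y => hlipν x y)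
          rw [← integral_sub hintHμ hintHν]
          exact my_abs_integral_le μ (Filter.Eventually.of_forall hHdiff)
      _ = (∑ i, b i) * dMK μ ν := by
          rw [Fin.sum_univ_succ]
          ring

variable {m L : ℕ}

lemma my_aem_rphi (φj : (Fin m → X) → X) (hφc : Continuous φj) (r : X → X) (hrm : Measurable r)
    {ρ : Measure X} [IsProbabilityMeasure ρ] {K : Set X} (hK : IsCompact K) (hρK : ρ Kᶜ = 0) :
    AEMeasurable (φj) (Measure.pi fun _ : Fin m => ρ)
      ∧ AEMeasurable (r ∘ φj) (Measure.pi fun _ : Fin m => ρ) := by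
  haveI : Nonempty X := ⟨(my_K_nonempty hρK).some⟩
  have hQm : MeasurableSet (Set.pi Set.univ fun _ : Fin m => K) :=
    MeasurableSet.univ_pi fun _ => hK.measurableSet
  have hQc : IsCompact (Set.pi Set.univ fun _ : Fin m => K) := isCompact_univ_pi fun _ => hK
  have h1 : AEMeasurable φj (Measure.pi fun _ : Fin m => ρ) :=
    my_aemeasurable hQm hQc.isSeparable hφc (my_pi_compl_null hρK)
  exact ⟨h1, hrm.comp_aemeasurable h1⟩

lemma my_good_step (φ : Fin L → (Fin m → X) → X) (hφc : ∀ j, Continuous (φ j))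
    (p : Fin L → NNReal) (hp1 : ∑ j, p j = 1)
    (ε : ℝ) (Xhat : Set X)
    (hproper : ∀ D : Set X, Bornology.IsBounded D → (D ∩ Xhat).Finite)
    (r : X → X) (hrm : Measurable r) (hr_range : ∀ x, r x ∈ Xhat)
    (hr_close : ∀ x, dist x (r x) ≤ ε)
    (ρ : Measure X) [IsProbabilityMeasure ρ] {K : Set X} (hK : IsCompact K) (hρK : ρ Kᶜ = 0) :
    IsProbabilityMeasure (∑ j, p j • (Measure.pi fun _ : Fin m => ρ).map (r ∘ φ j))
      ∧ ∃ K' : Set X, IsCompact K' ∧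
        (∑ j, p j • (Measure.pi fun _ : Fin m => ρ).map (r ∘ φ j)) K'ᶜ = 0 := by
  set π := (Measure.pi fun _ : Fin m => ρ) with hπ
  set Q := Set.pi Set.univ fun _ : Fin m => K with hQ
  have hQc : IsCompact Q := isCompact_univ_pi fun _ => hK
  have hπQ : π Qᶜ = 0 := my_pi_compl_null hρK
  have haem : ∀ j, AEMeasurable (r ∘ φ j) π := fun j =>
    (my_aem_rphi (φ j) (hφc j) r hrm hK hρK).2
  -- finite image sets
  have hSfin : ∀ j, Set.Finite (r '' (φ j '' Q)) := by
    intro j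
    have hC : IsCompact (φ j '' Q) := hQc.image (hφc j)
    refine Set.Finite.subset (hproper (Metric.cthickening ε (φ j '' Q))
      (hC.isBounded.cthickening)) ?_
    rintro y ⟨x, hx, rfl⟩
    refine ⟨?_, hr_range x⟩
    exact Metric.mem_cthickening_of_dist_le (r x) x ε _ hx (by rw [dist_comm]; exact hr_close x)
  set K' := ⋃ j : Fin L, r '' (φ j '' Q) with hK'
  have hK'fin : K'.Finite := Set.finite_iUnion hSfin
  have hK'c : IsCompact K' := hK'fin.isCompact
  have hK'm : MeasurableSet K' := hK'fin.measurableSet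
  have hmap0 : ∀ j, (π.map (r ∘ φ j)) K'ᶜ = 0 := by
    intro j
    rw [Measure.map_apply_of_aemeasurable (haem j) hK'm.compl]
    refine measure_mono_null (fun x hx => ?_) hπQ
    intro hxQ
    exact hx (Set.subset_iUnion (fun j => r '' (φ j '' Q)) j ⟨φ j x, ⟨x, hxQ, rfl⟩, rfl⟩)
  constructor
  · constructor
    rw [Measure.coe_finset_sum]
    simp only [Finset.sum_apply]
    have : ∀ j : Fin L, (p j • π.map (r ∘ φ j)) Set.univ = (p j : ENNReal) := by
      intro j
      haveI : IsProbabilityMeasure (π.map (r ∘ φ j)) := Measure.isProbabilityMeasure_map (haem j)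
      simp only [Measure.smul_apply, measure_univ, ENNReal.smul_def, smul_eq_mul, mul_one]
    rw [Finset.sum_congr rfl fun j _ => this j]
    rw [← ENNReal.coe_finset_sum, hp1, ENNReal.coe_one]
  · refine ⟨K', hK'c, ?_⟩
    rw [Measure.coe_finset_sum]
    simp only [Finset.sum_apply]
    refine Finset.sum_eq_zero fun j _ => ?_
    simp [Measure.smul_apply, hmap0 j]

lemma my_step (φ : Fin L → (Fin m → X) → X) (hφc : ∀ j, Continuous (φ j))
    (a : Fin m → ℝ) (ha : ∀ i, 0 ≤ a i)
    (hφ : ∀ j, ∀ x y : Fin m → X,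
      dist (φ j x) (φ j y) ≤ ∑ i, a i * dist (x i) (y i))
    (p : Fin L → NNReal) (hp1 : ∑ j, p j = 1)
    (μS : Measure X) [IsProbabilityMeasure μS] {KS : Set X} (hKS : IsCompact KS)
    (hKSnull : μS KSᶜ = 0)
    (hμSfix : (∑ j, p j • (Measure.pi fun _ : Fin m => μS).map (φ j)) = μS)
    (ε : ℝ) (hε : 0 ≤ ε)
    (r : X → X) (hrm : Measurable r) (hr_close : ∀ x, dist x (r x) ≤ ε)
    (ρ : Measure X) [IsProbabilityMeasure ρ] {K : Set X} (hK : IsCompact K)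
    (hρK : ρ Kᶜ = 0) :
    dMK (∑ j, p j • (Measure.pi fun _ : Fin m => ρ).map (r ∘ φ j)) μS
      ≤ ε + (∑ i, a i) * dMK ρ μS := by
  set π := (Measure.pi fun _ : Fin m => ρ) with hπdef
  set πS := (Measure.pi fun _ : Fin m => μS) with hπSdef
  set Q := Set.pi Set.univ fun _ : Fin m => K with hQdef
  have hQc : IsCompact Q := isCompact_univ_pi fun _ => hK
  have hπQ : π Qᶜ = 0 := my_pi_compl_null hρK
  refine my_dMK_le fun f hf => ?_
  have hfc : Continuous f := hf.continuous
  have haemφ : ∀ j, AEMeasurable (φ j) π := fun j =>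
    (my_aem_rphi (φ j) (hφc j) r hrm hK hρK).1
  have haem : ∀ j, AEMeasurable (r ∘ φ j) π := fun j =>
    (my_aem_rphi (φ j) (hφc j) r hrm hK hρK).2
  have haemφS : ∀ j, AEMeasurable (φ j) πS := fun j =>
    (my_aem_rphi (φ j) (hφc j) r hrm hKS hKSnull).1
  -- integrability of f ∘ r ∘ φ j over π
  have hint1 : ∀ j, Integrable (fun x => f (r (φ j x))) π := by
    intro j
    obtain ⟨C, hC⟩ := hQc.exists_bound_of_continuousOn (hfc.comp (hφc j)).continuousOn
    refine Integrable.mono' (integrable_const (C + ε))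
      ((hfc.measurable.comp_aemeasurable (haem j)).aestronglyMeasurable) ?_
    filter_upwards [my_ae_mem hπQ] with x hx
    have h1 : |f (r (φ j x)) - f (φ j x)| ≤ ε := by
      calc |f (r (φ j x)) - f (φ j x)| = dist (f (r (φ j x))) (f (φ j x)) := (Real.dist_eq _ _).symm
        _ ≤ 1 * dist (r (φ j x)) (φ j x) := hf.dist_le_mul _ _
        _ ≤ ε := by rw [one_mul, dist_comm]; exact hr_close _
    have h2 : |f (φ j x)| ≤ C := by simpa [Real.norm_eq_abs] using hC _ hx
    calc ‖f (r (φ j x))‖ = |f (r (φ j x))| := rfl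
      _ ≤ |f (φ j x)| + |f (r (φ j x)) - f (φ j x)| := by
          have := abs_add_le (f (φ j x)) (f (r (φ j x)) - f (φ j x))
          simpa using this
      _ ≤ C + ε := add_le_add h2 h1
  have hint2 : ∀ j, Integrable (fun x => f (φ j x)) π := fun j =>
    my_integrable_pi hK hρK (hfc.comp (hφc j))
  have hint2S : ∀ j, Integrable (fun x => f (φ j x)) πS := fun j =>
    my_integrable_pi hKS hKSnull (hfc.comp (hφc j))
  -- expand the two integrals as sums
  have hfasm : ∀ {κ : Measure X}, AEStronglyMeasurable f κ := fun {κ} =>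
    hfc.aestronglyMeasurable
  have hsum1 : ∫ x, f x ∂(∑ j, p j • π.map (r ∘ φ j))
      = ∑ j, (p j : ℝ) * ∫ x, f (r (φ j x)) ∂π := by
    rw [integral_finset_sum_measure ?_]
    · refine Finset.sum_congr rfl fun j _ => ?_
      rw [integral_smul_nnreal_measure]
      rw [integral_map (haem j) hfasm]
      simp [NNReal.smul_def]
    · intro j _
      refine Integrable.smul_measure ?_ ENNReal.coe_ne_top
      rw [integrable_map_measure hfasm (haem j)]
      exact hint1 j
  have hsum2 : ∫ x, f x ∂μS = ∑ j, (p j : ℝ) * ∫ x, f (φ j x) ∂πS := by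
    conv_lhs => rw [← hμSfix]
    rw [integral_finset_sum_measure ?_]
    · refine Finset.sum_congr rfl fun j _ => ?_
      rw [integral_smul_nnreal_measure]
      rw [integral_map (haemφS j) hfasm]
      simp [NNReal.smul_def]
    · intro j _
      refine Integrable.smul_measure ?_ ENNReal.coe_ne_top
      rw [integrable_map_measure hfasm (haemφS j)]
      exact hint2S j
  rw [hsum1, hsum2, ← Finset.sum_sub_distrib]
  have hterm : ∀ j : Fin L, |(p j : ℝ) * ∫ x, f (r (φ j x)) ∂π
      - (p j : ℝ) * ∫ x, f (φ j x) ∂πS| ≤ (p j : ℝ) * (ε + (∑ i, a i) * dMK ρ μS) := by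
    intro j
    rw [← mul_sub, abs_mul, abs_of_nonneg (p j).coe_nonneg]
    refine mul_le_mul_of_nonneg_left ?_ (p j).coe_nonneg
    have hA : |∫ x, f (r (φ j x)) ∂π - ∫ x, f (φ j x) ∂π| ≤ ε := by
      rw [← integral_sub (hint1 j) (hint2 j)]
      refine my_abs_integral_le π (Filter.Eventually.of_forall fun x => ?_)
      calc |f (r (φ j x)) - f (φ j x)| = dist (f (r (φ j x))) (f (φ j x)) :=
            (Real.dist_eq _ _).symm
        _ ≤ 1 * dist (r (φ j x)) (φ j x) := hf.dist_le_mul _ _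
        _ ≤ ε := by rw [one_mul, dist_comm]; exact hr_close _
    have hB : |∫ x, f (φ j x) ∂π - ∫ x, f (φ j x) ∂πS| ≤ (∑ i, a i) * dMK ρ μS := by
      refine my_keyA hK hρK hKS hKSnull m a ha (fun x => f (φ j x)) fun x y => ?_
      calc |f (φ j x) - f (φ j y)| = dist (f (φ j x)) (f (φ j y)) := (Real.dist_eq _ _).symm
        _ ≤ 1 * dist (φ j x) (φ j y) := hf.dist_le_mul _ _
        _ ≤ ∑ i, a i * dist (x i) (y i) := by rw [one_mul]; exact hφ j x y
    calc |∫ x, f (r (φ j x)) ∂π - ∫ x, f (φ j x) ∂πS|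
        ≤ |∫ x, f (r (φ j x)) ∂π - ∫ x, f (φ j x) ∂π|
          + |∫ x, f (φ j x) ∂π - ∫ x, f (φ j x) ∂πS| := abs_sub_le _ _ _
      _ ≤ ε + (∑ i, a i) * dMK ρ μS := add_le_add hA hB
  calc |∑ j, ((p j : ℝ) * ∫ x, f (r (φ j x)) ∂π - (p j : ℝ) * ∫ x, f (φ j x) ∂πS)|
      ≤ ∑ j, |(p j : ℝ) * ∫ x, f (r (φ j x)) ∂π - (p j : ℝ) * ∫ x, f (φ j x) ∂πS| :=
        Finset.abs_sum_le_sum_abs _ _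
    _ ≤ ∑ j, (p j : ℝ) * (ε + (∑ i, a i) * dMK ρ μS) := Finset.sum_le_sum fun j _ => hterm j
    _ = ε + (∑ i, a i) * dMK ρ μS := by
        rw [← Finset.sum_mul]
        have : (∑ j, (p j : ℝ)) = 1 := by
          exact_mod_cast congrArg (fun q : NNReal => (q : ℝ)) hp1
        rw [this, one_mul]

end Aux

/-- Discrete approximation of the Hutchinson measure of a GIFS with
probabilities consisting of `(a_0, ..., a_{m-1})`-contractions with
`α = Σ aᵢ < 1`: iterates of the discretized diagonal Markov operator on any
probability measure supported in a proper `ε`-net approximate the Hutchinson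
measure `μ_S` with error `ε/(1−α) + αⁿ · d_MK(ν, μ_S)`, and eventually with
error `2ε/(1−α)`. -/
theorem stmt19 {X : Type*} [MetricSpace X] [CompleteSpace X]
    [MeasurableSpace X] [BorelSpace X]
    {m L : ℕ} (hm : 1 ≤ m) (hL : 0 < L)
    (φ : Fin L → (Fin m → X) → X) (hφc : ∀ j, Continuous (φ j))
    (a : Fin m → ℝ) (ha : ∀ i, 0 ≤ a i) (ha1 : ∑ i, a i < 1)
    (hφ : ∀ j, ∀ x y : Fin m → X,
      dist (φ j x) (φ j y) ≤ ∑ i, a i * dist (x i) (y i))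
    (p : Fin L → NNReal) (hp : ∀ j, 0 < p j) (hp1 : ∑ j, p j = 1)
    (μS : Measure X) [IsProbabilityMeasure μS]
    (hμSc : ∃ K : Set X, IsCompact K ∧ μS Kᶜ = 0)
    (hμSfix : (∑ j, p j • (Measure.pi fun _ : Fin m => μS).map (φ j)) = μS)
    (ε : ℝ) (hε : 0 < ε) (Xhat : Set X)
    (hnet : ∀ x : X, ∃ y ∈ Xhat, dist x y ≤ ε)
    (hproper : ∀ D : Set X, Bornology.IsBounded D → (D ∩ Xhat).Finite)
    (r : X → X) (hrm : Measurable r)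
    (hr_range : ∀ x, r x ∈ Xhat)
    (hr_id : ∀ x ∈ Xhat, r x = x)
    (hr_close : ∀ x, dist x (r x) ≤ ε)
    (ν : Measure X) [IsProbabilityMeasure ν]
    (hνc : ∃ K : Set X, IsCompact K ∧ ν Kᶜ = 0)
    (hνsupp : msupport ν ⊆ Xhat) :
    (∀ n : ℕ,
      dMK ((fun ρ : Measure X =>
          ∑ j, p j • (Measure.pi fun _ : Fin m => ρ).map (r ∘ φ j))^[n] ν) μS
        ≤ ε / (1 - ∑ i, a i) + (∑ i, a i) ^ n * dMK ν μS) ∧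
    ∀ᶠ n in atTop,
      dMK ((fun ρ : Measure X =>
          ∑ j, p j • (Measure.pi fun _ : Fin m => ρ).map (r ∘ φ j))^[n] ν) μS
        ≤ 2 * ε / (1 - ∑ i, a i) := by
  obtain ⟨KS, hKS, hKSnull⟩ := hμSc
  obtain ⟨Kν, hKν, hKνnull⟩ := hνc
  have hα0 : 0 ≤ ∑ i, a i := Finset.sum_nonneg fun i _ => ha i
  have h1α : (0 : ℝ) < 1 - ∑ i, a i := by linarith
  set Mop : Measure X → Measure X :=
    fun ρ : Measure X => ∑ j, p j • (Measure.pi fun _ : Fin m => ρ).map (r ∘ φ j) with hMop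
  have hGood : ∀ n : ℕ, IsProbabilityMeasure (Mop^[n] ν) ∧
      ∃ K : Set X, IsCompact K ∧ (Mop^[n] ν) Kᶜ = 0 := by
    intro n
    induction n with
    | zero =>
      rw [Function.iterate_zero, id_eq]
      exact ⟨inferInstance, Kν, hKν, hKνnull⟩
    | succ n ihn =>
      obtain ⟨hprob, K, hKc, hKnull⟩ := ihn
      rw [Function.iterate_succ_apply']
      haveI := hprob
      obtain ⟨h1, h2⟩ := my_good_step φ hφc p hp1 ε Xhat hproper r hrm hr_range hr_close
        (Mop^[n] ν) hKc hKnull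
      exact ⟨h1, h2⟩
  have hbound : ∀ n : ℕ, dMK (Mop^[n] ν) μS
      ≤ ε / (1 - ∑ i, a i) + (∑ i, a i) ^ n * dMK ν μS := by
    intro n
    induction n with
    | zero =>
      simp only [Function.iterate_zero, id_eq, pow_zero, one_mul]
      have : 0 ≤ ε / (1 - ∑ i, a i) := div_nonneg hε.le h1α.le
      linarith
    | succ n ihn =>
      obtain ⟨hprob, K, hKc, hKnull⟩ := hGood n
      haveI := hprob
      rw [Function.iterate_succ_apply']
      refine le_trans (my_step φ hφc a ha hφ p hp1 μS hKS hKSnull hμSfix ε hε.le r hrm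
        hr_close (Mop^[n] ν) hKc hKnull) ?_
      calc ε + (∑ i, a i) * dMK (Mop^[n] ν) μS
          ≤ ε + (∑ i, a i) * (ε / (1 - ∑ i, a i) + (∑ i, a i) ^ n * dMK ν μS) :=
            add_le_add le_rfl (mul_le_mul_of_nonneg_left ihn hα0)
        _ = ε / (1 - ∑ i, a i) + (∑ i, a i) ^ (n + 1) * dMK ν μS := by
            field_simp
            ring
  refine ⟨hbound, ?_⟩
  have htend : Tendsto (fun n : ℕ => (∑ i, a i) ^ n * dMK ν μS) atTop (nhds 0) := by
    have h := tendsto_pow_atTop_nhds_zero_of_lt_one hα0 ha1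
    simpa using h.mul_const (dMK ν μS)
  have hev : ∀ᶠ n : ℕ in atTop, (∑ i, a i) ^ n * dMK ν μS ≤ ε / (1 - ∑ i, a i) :=
    htend.eventually (eventually_le_nhds (div_pos hε h1α))
  filter_upwards [hev] with n hn
  have h2 := hbound n
  have : ε / (1 - ∑ i, a i) + ε / (1 - ∑ i, a i) = 2 * ε / (1 - ∑ i, a i) := by ring
  linarith
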